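/- Let S/R be a Frobenius extension with Frobenius system (e, ε), and regard S as a Frobenius R-coring via Δ(s) = s·e, counit ε. Then the category of right S-modules is isomorphic to the category of right S-comodules: a right S-module M becomes a comodule via ρ(m) = m·e¹ ⊗ e², a right S-comodule M becomes a module via m·s = m₍₀₎ε(m₍₁₎s), and these constructions are mutually inverse and functorial (acting as the identity on morphisms). -/

import Mathlib

/-!
STATEMENT 6. For a Frobenius extension `S/R` with Frobenius system `(e, ε)` and
associated coring `Δ(s) = s·e`, counit `ε`, the category of right `S`-modules is
isomorphic to the category of right `S`-comodules:  `ρ(m) = m·e¹ ⊗ e²` and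
`m·s = m₍₀₎ ε(m₍₁₎ s)` are mutually inverse constructions, and a map is
`S`-linear iff it is colinear (the isomorphism is the identity on morphisms).
(`R` commutative acting centrally, i.e. `Algebra R S`.)
-/

open TensorProduct

section FrobDefs

variable {R S : Type*} [CommRing R] [Ring S] [Algebra R S]

/-- `x ⊗ y ↦ ε(x) • y`. -/
noncomputable def ctrL (ε : S →ₗ[R] R) : S ⊗[R] S →ₗ[R] S :=
  (TensorProduct.lid R S).toLinearMap ∘ₗ LinearMap.rTensor S ε

/-- `x ⊗ y ↦ ε(y) • x`. -/
noncomputable def ctrR (ε : S →ₗ[R] R) : S ⊗[R] S →ₗ[R] S :=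
  (TensorProduct.rid R S).toLinearMap ∘ₗ LinearMap.lTensor S ε

/-- `(e, ε)` is a Frobenius system for `S/R`. -/
noncomputable def IsFrobeniusSystem (e : S ⊗[R] S) (ε : S →ₗ[R] R) : Prop :=
  (∀ s : S, LinearMap.rTensor S (LinearMap.mulLeft R s) e
      = LinearMap.lTensor S (LinearMap.mulRight R s) e) ∧
  ctrL ε e = 1 ∧ ctrR ε e = 1

/-- The comultiplication `Δ(s) = s·e` of the associated coring. -/
noncomputable def Δe (e : S ⊗[R] S) : S →ₗ[R] S ⊗[R] S :=
  LinearMap.restrictScalars R (LinearMap.toSpanSingleton S (S ⊗[R] S) e)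

/-- A right `S`-module structure on the `R`-module `M` (extending its
`R`-structure along `R → S`), given by an `R`-bilinear unital associative
right action. -/
structure RightModStr (R S M : Type*) [CommRing R] [Ring S] [Algebra R S]
    [AddCommGroup M] [Module R M] where
  act : M →ₗ[R] S →ₗ[R] M
  act_one : ∀ m : M, act m 1 = m
  act_mul : ∀ (m : M) (s t : S), act (act m s) t = act m (s * t)

/-- A right comodule structure over the coring `(S, Δ, ε)` on the `R`-module
`M`: a coassociative counital right coaction. -/
structure RightComodStr (R S M : Type*) [CommRing R] [Ring S] [Algebra R S]
    [AddCommGroup M] [Module R M] (Δ : S →ₗ[R] S ⊗[R] S) (ε : S →ₗ[R] R) where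
  ρ : M →ₗ[R] M ⊗[R] S
  counit : ∀ m : M, TensorProduct.rid R M (LinearMap.lTensor M ε (ρ m)) = m
  coassoc : ∀ m : M, TensorProduct.assoc R M S S (LinearMap.rTensor S ρ (ρ m))
      = LinearMap.lTensor M Δ (ρ m)

end FrobDefs

section Aux

variable {R S : Type*} [CommRing R] [Ring S] [Algebra R S]
variable {M : Type*} [AddCommGroup M] [Module R M]

open LinearMap

lemma ctrL_tmul (ε : S →ₗ[R] R) (x y : S) : ctrL ε (x ⊗ₜ[R] y) = ε x • y := by
  simp [ctrL]

lemma ctrR_tmul (ε : S →ₗ[R] R) (x y : S) : ctrR ε (x ⊗ₜ[R] y) = ε y • x := by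
  simp [ctrR]

lemma Δe_apply (e : S ⊗[R] S) (s : S) : Δe e s = s • e := rfl

lemma smul_e (s x y : S) : s • (x ⊗ₜ[R] y) = (s * x) ⊗ₜ[R] y := by
  rw [smul_tmul', smul_eq_mul]

/-- The coaction `ρ(m) = m·e¹ ⊗ e²` associated to a right action. -/
noncomputable def coactOf (e : S ⊗[R] S) (X : RightModStr R S M) : M →ₗ[R] M ⊗[R] S where
  toFun m := LinearMap.rTensor S (X.act m) e
  map_add' m m' := by rw [map_add, LinearMap.rTensor_add, LinearMap.add_apply]
  map_smul' r m := by rw [map_smul, LinearMap.rTensor_smul, LinearMap.smul_apply, RingHom.id_apply]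

@[simp] lemma coactOf_apply (e : S ⊗[R] S) (X : RightModStr R S M) (m : M) :
    coactOf e X m = LinearMap.rTensor S (X.act m) e := rfl

/-- The action `m·s = m₍₀₎ ε(m₍₁₎ s)` associated to a coaction, curried with `s`
first. -/
noncomputable def actBase (ε : S →ₗ[R] R) (ρ : M →ₗ[R] M ⊗[R] S) : S →ₗ[R] M →ₗ[R] M where
  toFun s := (TensorProduct.rid R M).toLinearMap ∘ₗ
    LinearMap.lTensor M (ε ∘ₗ LinearMap.mulRight R s) ∘ₗ ρ
  map_add' s t := by
    have h : (ε ∘ₗ LinearMap.mulRight R (s + t))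
        = ε ∘ₗ LinearMap.mulRight R s + ε ∘ₗ LinearMap.mulRight R t := by
      ext x; simp [mul_add]
    ext m
    rw [h, LinearMap.lTensor_add]
    simp
  map_smul' r s := by
    have h : (ε ∘ₗ LinearMap.mulRight R (r • s)) = r • (ε ∘ₗ LinearMap.mulRight R s) := by
      ext x; simp [mul_smul_comm]
    ext m
    rw [h, LinearMap.lTensor_smul]
    simp

lemma actBase_apply (ε : S →ₗ[R] R) (ρ : M →ₗ[R] M ⊗[R] S) (s : S) (m : M) :
    actBase ε ρ s m
      = TensorProduct.rid R M (LinearMap.lTensor M (ε ∘ₗ LinearMap.mulRight R s) (ρ m)) := rfl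

variable (e : S ⊗[R] S) (ε : S →ₗ[R] R)

/-- The three Frobenius identities, in terms of a finite-sum representation of `e`. -/
lemma key_sum (h : IsFrobeniusSystem e ε) (T : Finset (S × S))
    (hT : e = T.sum fun p => p.1 ⊗ₜ[R] p.2) :
    (∀ s : S, (∑ p ∈ T, (s * p.1) ⊗ₜ[R] p.2) = ∑ p ∈ T, p.1 ⊗ₜ[R] (p.2 * s)) ∧
    (∀ u : S, (∑ p ∈ T, ε (u * p.1) • p.2) = u) ∧
    (∀ u : S, (∑ p ∈ T, ε (p.2 * u) • p.1) = u) := by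
  obtain ⟨h1, h2, h3⟩ := h
  rw [hT] at h2 h3
  rw [map_sum] at h2 h3
  simp only [ctrL_tmul, ctrR_tmul] at h2 h3
  have k3 : ∀ s : S, (∑ p ∈ T, (s * p.1) ⊗ₜ[R] p.2) = ∑ p ∈ T, p.1 ⊗ₜ[R] (p.2 * s) := by
    intro s
    have := h1 s
    rw [hT, map_sum, map_sum] at this
    simpa using this
  refine ⟨k3, ?_, ?_⟩
  · intro u
    have := congrArg (ctrL ε) (k3 u)
    rw [map_sum, map_sum] at this
    simp only [ctrL_tmul] at this
    calc (∑ p ∈ T, ε (u * p.1) • p.2) = ∑ p ∈ T, ε p.1 • (p.2 * u) := this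
      _ = (∑ p ∈ T, ε p.1 • p.2) * u := by
          rw [Finset.sum_mul]
          exact Finset.sum_congr rfl fun p _ => (smul_mul_assoc _ _ _).symm
      _ = u := by rw [h2, one_mul]
  · intro u
    have := congrArg (ctrR ε) (k3 u)
    rw [map_sum, map_sum] at this
    simp only [ctrR_tmul] at this
    calc (∑ p ∈ T, ε (p.2 * u) • p.1) = ∑ p ∈ T, ε p.2 • (u * p.1) := this.symm
      _ = u * (∑ p ∈ T, ε p.2 • p.1) := by
          rw [Finset.mul_sum]
          exact Finset.sum_congr rfl fun p _ => (mul_smul_comm _ _ _).symm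
      _ = u := by rw [h3, mul_one]

end Aux

section Main

variable {R S : Type*} [CommRing R] [Ring S] [Algebra R S]
variable {M : Type*} [AddCommGroup M] [Module R M]

open LinearMap

variable (e : S ⊗[R] S) (ε : S →ₗ[R] R)

/-- A right `S`-module structure yields a right comodule structure over the
Frobenius coring, via `ρ(m) = m·e¹ ⊗ e²`. -/
noncomputable def toComod (h : IsFrobeniusSystem e ε) (X : RightModStr R S M) :
    RightComodStr R S M (Δe e) ε where
  ρ := coactOf e X
  counit m := by
    obtain ⟨T, hT⟩ := TensorProduct.exists_finset e
    obtain ⟨-, -, k2⟩ := key_sum e ε h T hT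
    rw [coactOf_apply, hT, map_sum, map_sum, map_sum]
    simp only [rTensor_tmul, lTensor_tmul, TensorProduct.rid_tmul, coe_comp,
      Function.comp_apply]
    calc (∑ p ∈ T, ε p.2 • X.act m p.1)
        = X.act m (∑ p ∈ T, ε p.2 • p.1) := by rw [map_sum]; simp
      _ = X.act m 1 := by
          congr 1
          simpa using k2 1
      _ = m := X.act_one m
  coassoc m := by
    obtain ⟨T, hT⟩ := TensorProduct.exists_finset e
    obtain ⟨k3, -, -⟩ := key_sum e ε h T hT
    have hρ : ∀ n : M, coactOf e X n = ∑ p ∈ T, X.act n p.1 ⊗ₜ[R] p.2 := by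
      intro n; rw [coactOf_apply, hT, map_sum]; simp
    calc (TensorProduct.assoc R M S S) (rTensor S (coactOf e X) ((coactOf e X) m))
        = ∑ p ∈ T, ∑ q ∈ T, X.act m (p.1 * q.1) ⊗ₜ[R] (q.2 ⊗ₜ[R] p.2) := by
          rw [hρ m, map_sum, map_sum]
          refine Finset.sum_congr rfl fun p _ => ?_
          rw [rTensor_tmul, hρ, TensorProduct.sum_tmul, map_sum]
          refine Finset.sum_congr rfl fun q _ => ?_
          rw [TensorProduct.assoc_tmul, X.act_mul]
      _ = ∑ p ∈ T, ∑ q ∈ T, X.act m q.1 ⊗ₜ[R] ((q.2 * p.1) ⊗ₜ[R] p.2) := by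
          refine Finset.sum_congr rfl fun p _ => ?_
          have := congrArg
            (TensorProduct.map (X.act m) ((TensorProduct.mk R S S).flip p.2)) (k3 p.1)
          rw [map_sum, map_sum] at this
          simpa using this
      _ = ∑ q ∈ T, X.act m q.1 ⊗ₜ[R] (∑ p ∈ T, (q.2 * p.1) ⊗ₜ[R] p.2) := by
          rw [Finset.sum_comm]
          exact Finset.sum_congr rfl fun q _ => (TensorProduct.tmul_sum _ _ _).symm
      _ = lTensor M (Δe e) ((coactOf e X) m) := by
          rw [hρ m, map_sum]
          refine Finset.sum_congr rfl fun q _ => ?_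
          rw [lTensor_tmul, Δe_apply, hT, Finset.smul_sum]
          simp only [smul_e]

/-- A right comodule structure over the Frobenius coring yields a right
`S`-module structure, via `m·s = m₍₀₎ ε(m₍₁₎ s)`. -/
noncomputable def toMod (h : IsFrobeniusSystem e ε) (Y : RightComodStr R S M (Δe e) ε) :
    RightModStr R S M where
  act := (actBase ε Y.ρ).flip
  act_one m := by
    show actBase ε Y.ρ 1 m = m
    rw [actBase_apply, mulRight_one, comp_id]
    exact Y.counit m
  act_mul m s t := by
    show actBase ε Y.ρ t (actBase ε Y.ρ s m) = actBase ε Y.ρ (s * t) m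
    obtain ⟨T, hT⟩ := TensorProduct.exists_finset e
    obtain ⟨-, -, k2⟩ := key_sum e ε h T hT
    set q : S ⊗[R] S →ₗ[R] R :=
      LinearMap.mul' R R ∘ₗ
        TensorProduct.map (ε ∘ₗ mulRight R t) (ε ∘ₗ mulRight R s) with hq
    set G : M ⊗[R] (S ⊗[R] S) →ₗ[R] M :=
      (TensorProduct.rid R M).toLinearMap ∘ₗ lTensor M q with hG
    have auxA : ∀ (z : M ⊗[R] S) (x : S),
        G ((TensorProduct.assoc R M S S) (z ⊗ₜ[R] x))
          = ε (x * s) •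
            (TensorProduct.rid R M) (lTensor M (ε ∘ₗ mulRight R t) z) := by
      intro z x
      induction z using TensorProduct.induction_on with
      | zero => simp
      | tmul m' y =>
        simp only [TensorProduct.assoc_tmul, hG, hq, coe_comp, Function.comp_apply,
          lTensor_tmul, TensorProduct.map_tmul, mul'_apply, mulRight_apply,
          TensorProduct.rid_tmul, LinearEquiv.coe_coe]
        rw [smul_smul, mul_comm]
      | add z₁ z₂ ih₁ ih₂ =>
        rw [TensorProduct.add_tmul, map_add, map_add, ih₁, ih₂, map_add, map_add,
          smul_add]
    have step1 : ∀ z : M ⊗[R] S,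
        (TensorProduct.rid R M) (lTensor M (ε ∘ₗ mulRight R t)
          (Y.ρ ((TensorProduct.rid R M) (lTensor M (ε ∘ₗ mulRight R s) z))))
        = G ((TensorProduct.assoc R M S S) (rTensor S Y.ρ z)) := by
      intro z
      induction z using TensorProduct.induction_on with
      | zero => simp
      | tmul m' x =>
        rw [rTensor_tmul, auxA, lTensor_tmul, TensorProduct.rid_tmul]
        simp [coe_comp, Function.comp_apply, mulRight_apply]
      | add z₁ z₂ ih₁ ih₂ =>
        simp only [map_add, ih₁, ih₂]
    have hqΔ : ∀ x : S, q (Δe e x) = ε (x * (s * t)) := by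
      intro x
      rw [Δe_apply, hT, Finset.smul_sum, map_sum]
      have key := congrArg (ε ∘ₗ mulRight R t ∘ₗ mulLeft R x) (k2 s)
      rw [map_sum] at key
      simp only [coe_comp, Function.comp_apply, mulLeft_apply, mulRight_apply,
        map_smul, smul_eq_mul] at key
      calc (∑ p ∈ T, q (x • (p.1 ⊗ₜ[R] p.2)))
          = ∑ p ∈ T, ε (p.2 * s) * ε (x * p.1 * t) := by
            refine Finset.sum_congr rfl fun p _ => ?_
            rw [smul_e, hq]
            simp only [coe_comp, Function.comp_apply, TensorProduct.map_tmul,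
              mul'_apply, mulRight_apply]
            rw [mul_comm]
        _ = ε (x * s * t) := key
        _ = ε (x * (s * t)) := by rw [mul_assoc]
    have step2 : ∀ z : M ⊗[R] S,
        G (lTensor M (Δe e) z)
          = (TensorProduct.rid R M) (lTensor M (ε ∘ₗ mulRight R (s * t)) z) := by
      intro z
      induction z using TensorProduct.induction_on with
      | zero => simp
      | tmul m' x =>
        rw [lTensor_tmul, lTensor_tmul, hG]
        simp only [coe_comp, Function.comp_apply, lTensor_tmul,
          TensorProduct.rid_tmul, LinearEquiv.coe_coe, mulRight_apply]
        rw [hqΔ]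
      | add z₁ z₂ ih₁ ih₂ =>
        rw [map_add, map_add, map_add, map_add, ih₁, ih₂]
    rw [actBase_apply, actBase_apply, actBase_apply, step1 (Y.ρ m), Y.coassoc m,
      step2 (Y.ρ m)]

lemma modStr_ext {X Y : RightModStr R S M} (hxy : X.act = Y.act) : X = Y := by
  cases X; cases Y; cases hxy; rfl

lemma comodStr_ext {Δ : S →ₗ[R] S ⊗[R] S} {ε' : S →ₗ[R] R}
    {X Y : RightComodStr R S M Δ ε'} (hxy : X.ρ = Y.ρ) : X = Y := by
  cases X; cases Y; cases hxy; rfl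

lemma toMod_toComod (h : IsFrobeniusSystem e ε) (X : RightModStr R S M) :
    toMod e ε h (toComod e ε h X) = X := by
  obtain ⟨T, hT⟩ := TensorProduct.exists_finset e
  obtain ⟨-, -, k2⟩ := key_sum e ε h T hT
  refine modStr_ext ?_
  ext m s
  show actBase ε (coactOf e X) s m = X.act m s
  rw [actBase_apply, coactOf_apply, hT, map_sum, map_sum, map_sum]
  simp only [rTensor_tmul, lTensor_tmul, TensorProduct.rid_tmul, coe_comp,
    Function.comp_apply, mulRight_apply]
  calc (∑ p ∈ T, ε (p.2 * s) • X.act m p.1)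
      = X.act m (∑ p ∈ T, ε (p.2 * s) • p.1) := by rw [map_sum]; simp
    _ = X.act m s := by rw [k2 s]

lemma toComod_toMod (h : IsFrobeniusSystem e ε) (Y : RightComodStr R S M (Δe e) ε) :
    toComod e ε h (toMod e ε h Y) = Y := by
  obtain ⟨T, hT⟩ := TensorProduct.exists_finset e
  obtain ⟨-, k1, -⟩ := key_sum e ε h T hT
  refine comodStr_ext ?_
  ext m
  show rTensor S ((actBase ε Y.ρ).flip m) e = Y.ρ m
  obtain ⟨U, hU⟩ := TensorProduct.exists_finset (Y.ρ m)
  have hact : ∀ v : S, (actBase ε Y.ρ).flip m v = ∑ k ∈ U, ε (k.2 * v) • k.1 := by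
    intro v
    show actBase ε Y.ρ v m = _
    rw [actBase_apply, hU, map_sum, map_sum]
    simp [mulRight_apply]
  have expand : ∀ f : S →ₗ[R] M, rTensor S f e = ∑ p ∈ T, f p.1 ⊗ₜ[R] p.2 := by
    intro f; rw [hT, map_sum]; simp
  calc rTensor S ((actBase ε Y.ρ).flip m) e
      = ∑ p ∈ T, (∑ k ∈ U, ε (k.2 * p.1) • k.1) ⊗ₜ[R] p.2 := by
        rw [expand]
        exact Finset.sum_congr rfl fun p _ => by rw [hact]
    _ = ∑ k ∈ U, ∑ p ∈ T, ε (k.2 * p.1) • (k.1 ⊗ₜ[R] p.2) := by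
        rw [Finset.sum_comm]
        refine Finset.sum_congr rfl fun p _ => ?_
        rw [TensorProduct.sum_tmul]
        exact Finset.sum_congr rfl fun k _ => by rw [TensorProduct.smul_tmul']
    _ = ∑ k ∈ U, k.1 ⊗ₜ[R] (∑ p ∈ T, ε (k.2 * p.1) • p.2) := by
        refine Finset.sum_congr rfl fun k _ => ?_
        rw [TensorProduct.tmul_sum]
        exact Finset.sum_congr rfl fun p _ => by rw [TensorProduct.tmul_smul]
    _ = ∑ k ∈ U, k.1 ⊗ₜ[R] k.2 := by
        refine Finset.sum_congr rfl fun k _ => ?_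
        rw [k1 k.2]
    _ = Y.ρ m := hU.symm

end Main

/-- For a Frobenius extension `S/R`, right `S`-module structures and right
`S`-comodule structures (over the coring `Δ(s) = s·e`, counit `ε`) on any
`R`-module correspond bijectively via `ρ(m) = m·e¹ ⊗ e²` and
`m·s = m₍₀₎ ε(m₍₁₎ s)`, and an `R`-linear map between two such objects is a
module map iff it is a comodule map; thus the categories of right `S`-modules
and right `S`-comodules are isomorphic via functors acting as the identity on
morphisms. -/
theorem modules_iso_comodules_of_frobenius
    {R S : Type*} [CommRing R] [Ring S] [Algebra R S]
    (e : S ⊗[R] S) (ε : S →ₗ[R] R) (h : IsFrobeniusSystem e ε)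
    (M N : Type*) [AddCommGroup M] [Module R M] [AddCommGroup N] [Module R N] :
    ∃ (ΦM : RightModStr R S M ≃ RightComodStr R S M (Δe e) ε)
      (ΦN : RightModStr R S N ≃ RightComodStr R S N (Δe e) ε),
      -- the coaction associated to an action: `ρ(m) = m·e¹ ⊗ e²`
      (∀ (X : RightModStr R S M) (m : M),
        (ΦM X).ρ m = LinearMap.rTensor S (X.act m) e) ∧
      (∀ (X : RightModStr R S N) (n : N),
        (ΦN X).ρ n = LinearMap.rTensor S (X.act n) e) ∧
      -- the action associated to a coaction: `m·s = m₍₀₎ ε(m₍₁₎ s)`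
      (∀ (Y : RightComodStr R S M (Δe e) ε) (m : M) (s : S),
        (ΦM.symm Y).act m s
          = TensorProduct.rid R M
              (LinearMap.lTensor M (ε ∘ₗ LinearMap.mulRight R s) (Y.ρ m))) ∧
      (∀ (Y : RightComodStr R S N (Δe e) ε) (n : N) (s : S),
        (ΦN.symm Y).act n s
          = TensorProduct.rid R N
              (LinearMap.lTensor N (ε ∘ₗ LinearMap.mulRight R s) (Y.ρ n))) ∧
      -- functoriality: a map is `S`-linear iff it is `S`-colinear
      (∀ (X : RightModStr R S M) (X' : RightModStr R S N) (f : M →ₗ[R] N),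
        (∀ (m : M) (s : S), f (X.act m s) = X'.act (f m) s) ↔
        (∀ m : M, LinearMap.rTensor S f ((ΦM X).ρ m) = (ΦN X').ρ (f m))) := by
  classical
  obtain ⟨T, hT⟩ := TensorProduct.exists_finset e
  obtain ⟨-, -, k2⟩ := key_sum e ε h T hT
  refine ⟨⟨toComod e ε h, toMod e ε h, toMod_toComod e ε h, toComod_toMod e ε h⟩,
    ⟨toComod e ε h, toMod e ε h, toMod_toComod e ε h, toComod_toMod e ε h⟩,
    fun X m => rfl, fun X n => rfl, fun Y m s => rfl, fun Y n s => rfl, ?_⟩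
  intro X X' f
  have ev : ∀ g : S →ₗ[R] N, ∀ s : S,
      TensorProduct.rid R N
        (LinearMap.lTensor N (ε ∘ₗ LinearMap.mulRight R s) (LinearMap.rTensor S g e)) = g s := by
    intro g s
    rw [hT, map_sum, map_sum, map_sum]
    simp only [LinearMap.rTensor_tmul, LinearMap.lTensor_tmul, TensorProduct.rid_tmul,
      LinearMap.coe_comp, Function.comp_apply, LinearMap.mulRight_apply]
    calc (∑ p ∈ T, ε (p.2 * s) • g p.1)
        = g (∑ p ∈ T, ε (p.2 * s) • p.1) := by rw [map_sum]; simp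
      _ = g s := by rw [k2 s]
  constructor
  · intro hf m
    show LinearMap.rTensor S f (LinearMap.rTensor S (X.act m) e)
      = LinearMap.rTensor S (X'.act (f m)) e
    have hcomp : f ∘ₗ X.act m = X'.act (f m) := LinearMap.ext fun s => hf m s
    rw [← LinearMap.comp_apply, ← LinearMap.rTensor_comp, hcomp]
  · intro hc m s
    have hc' : LinearMap.rTensor S f (LinearMap.rTensor S (X.act m) e)
        = LinearMap.rTensor S (X'.act (f m)) e := hc m
    have h1 : LinearMap.rTensor S (f ∘ₗ X.act m) e
        = LinearMap.rTensor S (X'.act (f m)) e := by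
      rw [LinearMap.rTensor_comp, LinearMap.comp_apply, hc']
    have := congrArg (fun z => (TensorProduct.rid R N)
      (LinearMap.lTensor N (ε ∘ₗ LinearMap.mulRight R s) z)) h1
    simpa only [ev, LinearMap.comp_apply] using this
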